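/- arXiv:2003.05168 — 6 statements merged into one kernel-verified Lean document; each statement's English description precedes it below -/
import Mathlib

section
/- Let k ≥ 2 be an integer, let w_1, …, w_{k−1} ≥ 0 be window durations and θ_1, …, θ_{k−1} real execution rates with θ_j ≤ θ_{j+1} for all 1 ≤ j ≤ k−2, and let u be a real number. Write W_p = w_1 + ⋯ + w_p (W_0 = 0). Suppose Σ_{j=1}^{k−1} θ_j·w_j ≥ u·W_{k−1}. Then for every real t ≥ 0 and every index p with 1 ≤ p ≤ k−1 and W_{p−1} ≤ t < W_p, the total allocation over [t, W_{k−1}], namely (W_p − t)·θ_p + Σ_{j=p+1}^{k−1} θ_j·w_j, is at least u·(W_{k−1} − t). -/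
/-- Total duration of the first `p` windows: `W_p = w_1 + ⋯ + w_p` (with `W_0 = 0`). -/
noncomputable def Wsum (w : ℕ → ℝ) (p : ℕ) : ℝ := ∑ j ∈ Finset.Icc 1 p, w j

private lemma theta_mono (θ : ℕ → ℝ) (n : ℕ)
    (hstep : ∀ j, 1 ≤ j → j + 1 ≤ n → θ j ≤ θ (j + 1)) :
    ∀ i j, 1 ≤ i → i ≤ j → j ≤ n → θ i ≤ θ j := by
  intro i j hi hij hjn
  induction j with
  | zero => omega
  | succ m ih =>
    rcases Nat.lt_or_ge i (m + 1) with h | h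
    · have him : i ≤ m := by omega
      exact (ih him (by omega)).trans (hstep m (by omega) hjn)
    · have : i = m + 1 := by omega
      simp [this]

/-- **Lemma 1** (tail allocation of nondecreasing piecewise-constant rates):
if the rates `θ_1 ≤ ⋯ ≤ θ_{k-1}` over windows of durations `w_1, …, w_{k-1}` satisfy
`Σ θ_j w_j ≥ u·W_{k-1}`, then for any `t ≥ 0` lying in window `p` (i.e. `W_{p-1} ≤ t < W_p`),
the allocation over `[t, W_{k-1}]`, namely `(W_p − t)·θ_p + Σ_{j=p+1}^{k−1} θ_j·w_j`,
is at least `u·(W_{k−1} − t)`. -/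
theorem stmt0 (k : ℕ) (hk : 2 ≤ k) (w θ : ℕ → ℝ)
    (hw : ∀ j, 1 ≤ j → j ≤ k - 1 → 0 ≤ w j)
    (hθmono : ∀ j, 1 ≤ j → j ≤ k - 2 → θ j ≤ θ (j + 1))
    (u : ℝ)
    (hsum : u * Wsum w (k - 1) ≤ ∑ j ∈ Finset.Icc 1 (k - 1), θ j * w j)
    (t : ℝ) (ht : 0 ≤ t) (p : ℕ) (hp1 : 1 ≤ p) (hp2 : p ≤ k - 1)
    (htlo : Wsum w (p - 1) ≤ t) (hthi : t < Wsum w p) :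
    u * (Wsum w (k - 1) - t) ≤
      (Wsum w p - t) * θ p + ∑ j ∈ Finset.Icc (p + 1) (k - 1), θ j * w j := by
  set n := k - 1 with hn
  have hn1 : 1 ≤ n := by omega
  have hmono : ∀ i j, 1 ≤ i → i ≤ j → j ≤ n → θ i ≤ θ j :=
    theta_mono θ n (fun j h1 h2 => hθmono j h1 (by omega))
  have hicc : ∀ m : ℕ, Finset.Icc 1 m = Finset.Ioc 0 m := by
    intro m; rw [← Finset.Icc_add_one_left_eq_Ioc, zero_add]
  -- f1 : Wsum w p = Wsum w (p-1) + w p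
  have f1 : Wsum w p = Wsum w (p - 1) + w p := by
    unfold Wsum
    rw [hicc p, hicc (p - 1), ← Finset.sum_Ioc_consecutive _ (Nat.zero_le (p - 1)) (by omega : p - 1 ≤ p)]
    have : Finset.Ioc (p - 1) p = {p} := by
      ext x; simp only [Finset.mem_Ioc, Finset.mem_singleton]; omega
    rw [this, Finset.sum_singleton]
  -- f2 : Wsum w n = Wsum w p + ∑ Icc (p+1) n w
  have f2 : Wsum w n = Wsum w p + ∑ j ∈ Finset.Icc (p + 1) n, w j := by
    unfold Wsum
    rw [hicc n, hicc p,
      show Finset.Icc (p + 1) n = Finset.Ioc p n from by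
        ext x; simp only [Finset.mem_Icc, Finset.mem_Ioc]; omega,
      ← Finset.sum_Ioc_consecutive _ (Nat.zero_le p) hp2]
  -- f3 : total sum splits
  have f3 : ∑ j ∈ Finset.Icc 1 n, θ j * w j
      = (∑ j ∈ Finset.Icc 1 (p - 1), θ j * w j) + θ p * w p
        + ∑ j ∈ Finset.Icc (p + 1) n, θ j * w j := by
    rw [hicc n, hicc (p - 1),
      show Finset.Icc (p + 1) n = Finset.Ioc p n from by
        ext x; simp only [Finset.mem_Icc, Finset.mem_Ioc]; omega,
      ← Finset.sum_Ioc_consecutive _ (Nat.zero_le p) hp2,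
      ← Finset.sum_Ioc_consecutive _ (Nat.zero_le (p - 1)) (by omega : p - 1 ≤ p)]
    have hone : Finset.Ioc (p - 1) p = {p} := by
      ext x; simp only [Finset.mem_Ioc, Finset.mem_singleton]; omega
    rw [hone, Finset.sum_singleton]
  -- f4 : head sum bound
  have f4 : ∑ j ∈ Finset.Icc 1 (p - 1), θ j * w j ≤ θ p * Wsum w (p - 1) := by
    unfold Wsum
    rw [Finset.mul_sum]
    apply Finset.sum_le_sum
    intro j hj
    simp only [Finset.mem_Icc] at hj
    exact mul_le_mul_of_nonneg_right (hmono j p hj.1 (by omega) hp2)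
      (hw j hj.1 (by omega))
  -- f5 : tail sum bound
  have f5 : θ p * (∑ j ∈ Finset.Icc (p + 1) n, w j) ≤ ∑ j ∈ Finset.Icc (p + 1) n, θ j * w j := by
    rw [Finset.mul_sum]
    apply Finset.sum_le_sum
    intro j hj
    simp only [Finset.mem_Icc] at hj
    exact mul_le_mul_of_nonneg_right (hmono p j hp1 (by omega) hj.2)
      (hw j (by omega) hj.2)
  have f6 : 0 ≤ ∑ j ∈ Finset.Icc (p + 1) n, w j :=
    Finset.sum_nonneg fun j hj => by
      simp only [Finset.mem_Icc] at hj; exact hw j (by omega) hj.2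
  set A := ∑ j ∈ Finset.Icc 1 (p - 1), θ j * w j
  set B := ∑ j ∈ Finset.Icc (p + 1) n, θ j * w j
  set Wp := Wsum w p
  set Wp1 := Wsum w (p - 1)
  set Wn := Wsum w n
  have hWpWn : Wp ≤ Wn := by rw [f2]; linarith
  have hTpos : 0 < Wn - t := by linarith
  have hWnpos : 0 < Wn := by linarith
  have h1 : A + (t - Wp1) * θ p ≤ θ p * t := by nlinarith [f4]
  have h2 : θ p * (Wn - t) ≤ (Wp - t) * θ p + B := by
    have hWnt : Wn - t = (Wp - t) + ∑ j ∈ Finset.Icc (p + 1) n, w j := by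
      rw [f2]; ring
    rw [hWnt, mul_add]
    have : θ p * (Wp - t) = (Wp - t) * θ p := by ring
    linarith [f5]
  have h3 : u * Wn ≤ (A + (t - Wp1) * θ p) + ((Wp - t) * θ p + B) := by
    rw [f3] at hsum
    have hkey : (t - Wp1) * θ p + (Wp - t) * θ p = θ p * w p := by
      rw [f1]; ring
    linarith
  nlinarith [mul_le_mul_of_nonneg_right h3 hTpos.le,
    mul_le_mul_of_nonneg_right h1 hTpos.le,
    mul_le_mul_of_nonneg_right h2 ht]
end

section
/- Let n ≥ 1, let w_1, …, w_n ≥ 0, let θ_1, …, θ_n, θH be real rates, and let f be the associated multi-rate rate function. Let D > 0 and let k ∈ {1, …, n+1} be an earliest completion window for D, with R = θ_k if k ≤ n and R = θH if k = n+1. Then ∫_0^D f(s) ds = Σ_{j=1}^{k−1} θ_j·w_j + R·(D − W_{k−1}). Consequently, for reals C^L ≤ C^H, the inequality ∫_0^D f(s) ds ≥ C^H − C^L holds if and only if Σ_{j=1}^{k−1} θ_j·w_j + R·(D − W_{k−1}) ≥ C^H − C^L. -/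
/-- The multi-rate fluid rate function: `f s = θ j` for `W_{j-1} ≤ s < W_j`
(`1 ≤ j ≤ n`) and `f s = θH` for `s ≥ W_n`. -/
noncomputable def rateFn (n : ℕ) (w θ : ℕ → ℝ) (θH : ℝ) (s : ℝ) : ℝ :=
  if s < Wsum w n then θ (sInf {j : ℕ | 1 ≤ j ∧ s < Wsum w j}) else θH

/-- `k ∈ {1, …, n+1}` is an earliest completion window for `D` if `W_{k-1} < D`
and, in case `k ≤ n`, also `W_k ≥ D`. -/
def ECW (n : ℕ) (w : ℕ → ℝ) (D : ℝ) (k : ℕ) : Prop :=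
  1 ≤ k ∧ k ≤ n + 1 ∧ Wsum w (k - 1) < D ∧ (k ≤ n → D ≤ Wsum w k)

lemma Wmono {n : ℕ} {w : ℕ → ℝ} (hw : ∀ j, 1 ≤ j → j ≤ n → 0 ≤ w j)
    {a b : ℕ} (hab : a ≤ b) (hbn : b ≤ n) : Wsum w a ≤ Wsum w b := by
  apply Finset.sum_le_sum_of_subset_of_nonneg
  · exact Finset.Icc_subset_Icc le_rfl hab
  · intro i hi _
    exact hw i (Finset.mem_Icc.mp hi).1 (le_trans (Finset.mem_Icc.mp hi).2 hbn)

lemma Wsucc (w : ℕ → ℝ) (p : ℕ) : Wsum w (p+1) = Wsum w p + w (p+1) := by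
  simp [Wsum, Finset.sum_Icc_succ_top (Nat.succ_le_succ (Nat.zero_le p))]

lemma constIoo {f : ℝ → ℝ} {a b c : ℝ} (hab : a ≤ b)
    (h : ∀ s ∈ Set.Ioo a b, f s = c) :
    IntervalIntegrable f MeasureTheory.volume a b ∧ (∫ s in a..b, f s) = c * (b - a) := by
  have hae : ∀ᵐ s ∂MeasureTheory.volume, s ∈ Set.Ioc a b → f s = c := by
    have hsub : {s : ℝ | ¬ (s ∈ Set.Ioc a b → f s = c)} ⊆ {b} := by
      intro s hs
      simp only [Set.mem_setOf_eq, _root_.not_imp] at hs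
      rcases hs with ⟨hs1, hs2⟩
      by_contra hb
      simp only [Set.mem_singleton_iff] at hb
      exact hs2 (h s ⟨hs1.1, lt_of_le_of_ne hs1.2 hb⟩)
    exact MeasureTheory.ae_iff.mpr (MeasureTheory.measure_mono_null hsub (MeasureTheory.measure_singleton b))
  have haer : f =ᵐ[MeasureTheory.volume.restrict (Set.Ioc a b)] fun _ => c :=
    (MeasureTheory.ae_restrict_iff' measurableSet_Ioc).mpr hae
  have hint : MeasureTheory.IntegrableOn f (Set.Ioc a b) := by
    apply MeasureTheory.Integrable.congr _ haer.symm
    exact MeasureTheory.integrableOn_const measure_Ioc_lt_top.ne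
  constructor
  · rw [intervalIntegrable_iff, Set.uIoc_of_le hab]
    exact hint
  · rw [intervalIntegral.integral_of_le hab,
      MeasureTheory.setIntegral_congr_ae measurableSet_Ioc hae,
      MeasureTheory.setIntegral_const, Real.volume_real_Ioc_of_le hab,
      smul_eq_mul, mul_comm]

lemma val_window (n : ℕ) (w θ : ℕ → ℝ) (θH : ℝ)
    (hw : ∀ j, 1 ≤ j → j ≤ n → 0 ≤ w j) {j : ℕ} (hj1 : 1 ≤ j) (hjn : j ≤ n) {s : ℝ}
    (h1 : Wsum w (j-1) ≤ s) (h2 : s < Wsum w j) :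
    rateFn n w θ θH s = θ j := by
  have hsn : s < Wsum w n := lt_of_lt_of_le h2 (Wmono hw hjn le_rfl)
  have hjset : j ∈ {i : ℕ | 1 ≤ i ∧ s < Wsum w i} := ⟨hj1, h2⟩
  have hne : {i : ℕ | 1 ≤ i ∧ s < Wsum w i}.Nonempty := ⟨j, hjset⟩
  have hinf : sInf {i : ℕ | 1 ≤ i ∧ s < Wsum w i} = j := by
    have hle := Nat.sInf_le hjset
    have hmem := Nat.sInf_mem hne
    rcases hmem with ⟨hm1, hm2⟩
    by_contra hne2
    have hlt : sInf {i : ℕ | 1 ≤ i ∧ s < Wsum w i} ≤ j - 1 := by omega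
    exact absurd hm2 (not_lt.mpr (le_trans (Wmono hw hlt (by omega)) h1))
  simp only [rateFn, if_pos hsn, hinf]

lemma int_upto (n : ℕ) (w θ : ℕ → ℝ) (θH : ℝ)
    (hw : ∀ j, 1 ≤ j → j ≤ n → 0 ≤ w j) :
    ∀ p, p ≤ n →
    IntervalIntegrable (rateFn n w θ θH) MeasureTheory.volume 0 (Wsum w p) ∧
    (∫ s in (0:ℝ)..Wsum w p, rateFn n w θ θH s) = ∑ j ∈ Finset.Icc 1 p, θ j * w j := by
  intro p
  induction p with
  | zero =>
    intro _
    have h0 : Wsum w 0 = 0 := by simp [Wsum]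
    rw [h0]
    constructor
    · exact (constIoo (c := 0) le_rfl (by simp)).1
    · simp
  | succ p ih =>
    intro hpn
    have hp : p ≤ n := Nat.le_of_succ_le hpn
    obtain ⟨ihint, ihval⟩ := ih hp
    have hmono : Wsum w p ≤ Wsum w (p+1) := Wmono hw (Nat.le_succ p) hpn
    have hpiece := constIoo (f := rateFn n w θ θH) (c := θ (p+1)) hmono
      (by
        intro s hs
        exact val_window n w θ θH hw (Nat.succ_le_succ (Nat.zero_le p)) hpn
          (by simpa using le_of_lt hs.1) hs.2)
    constructor
    · exact ihint.trans hpiece.1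
    · rw [← intervalIntegral.integral_add_adjacent_intervals ihint hpiece.1, ihval, hpiece.2,
        Finset.sum_Icc_succ_top (Nat.succ_le_succ (Nat.zero_le p)), Wsucc]
      ring

/-- Computational core of Theorem 1: `∫_0^D f = Σ_{j=1}^{k−1} θ_j·w_j + R·(D − W_{k−1})`,
hence for `C^L ≤ C^H` the allocation `∫_0^D f` is at least `C^H − C^L` iff
`Σ_{j=1}^{k−1} θ_j·w_j + R·(D − W_{k−1}) ≥ C^H − C^L`. -/
theorem stmt1 (n : ℕ) (hn : 1 ≤ n) (w θ : ℕ → ℝ)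
    (hw : ∀ j, 1 ≤ j → j ≤ n → 0 ≤ w j) (θH : ℝ)
    (D : ℝ) (hD : 0 < D) (k : ℕ) (hk : ECW n w D k)
    (R : ℝ) (hR : R = if k ≤ n then θ k else θH) :
    (∫ s in (0:ℝ)..D, rateFn n w θ θH s)
        = ∑ j ∈ Finset.Icc 1 (k - 1), θ j * w j + R * (D - Wsum w (k - 1))
    ∧ ∀ CL CH : ℝ, CL ≤ CH →
        ((CH - CL ≤ ∫ s in (0:ℝ)..D, rateFn n w θ θH s) ↔
          CH - CL ≤ ∑ j ∈ Finset.Icc 1 (k - 1), θ j * w j + R * (D - Wsum w (k - 1))) := by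
  unfold ECW at hk

  obtain ⟨hk1, hkn1, hWD, hDW⟩ := hk
  have hkm1 : k - 1 ≤ n := by omega
  obtain ⟨hint1, hval1⟩ := int_upto n w θ θH hw (k-1) hkm1
  have hpiece := constIoo (f := rateFn n w θ θH) (c := R) (le_of_lt hWD)
    (by
      intro s hs
      by_cases hkn : k ≤ n
      · rw [hR, if_pos hkn]
        have hk1' : k - 1 + 1 = k := by omega
        apply val_window n w θ θH hw hk1 hkn (le_of_lt hs.1)
        exact lt_of_lt_of_le hs.2 (hDW hkn)
      · rw [hR, if_neg hkn]
        have hkn' : k - 1 = n := by omega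
        have : Wsum w n ≤ s := by rw [← hkn']; exact le_of_lt hs.1
        simp only [rateFn, if_neg (not_lt.mpr this)])
  have hmain : (∫ s in (0:ℝ)..D, rateFn n w θ θH s)
      = ∑ j ∈ Finset.Icc 1 (k - 1), θ j * w j + R * (D - Wsum w (k - 1)) := by
    rw [← intervalIntegral.integral_add_adjacent_intervals hint1 hpiece.1, hval1, hpiece.2]
  exact ⟨hmain, fun CL CH _ => by rw [hmain]⟩
end

section
/- Let n ≥ 1, let w_1, …, w_n ≥ 0, let θ_1, …, θ_n, θH be real rates with associated rate function f. Let T > 0, θ^L > 0 and 0 < C^L ≤ C^H be reals, set D = T − C^L/θ^L, suppose D > 0, and let k ∈ {1, …, n+1} be an earliest completion window for D, with R = θ_k if k ≤ n and R = θH if k = n+1. Assume (i) Σ_{j=1}^{k−1} θ_j·w_j + R·(D − W_{k−1}) ≥ C^H − C^L; (ii) θ_j ≥ θ^L for all k ≤ j ≤ n; and (iii) θH ≥ θ^L. Then for every t ≥ D, ∫_0^t f(s) ds ≥ (C^H − C^L) + θ^L·(t − D). -/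
open MeasureTheory in
/-- A function equal to a constant on `[a, b)` is interval integrable with integral
`c * (b - a)`. -/
lemma piece_const {f : ℝ → ℝ} {a b c : ℝ} (hab : a ≤ b)
    (h : ∀ s ∈ Set.Ico a b, f s = c) :
    IntervalIntegrable f volume a b ∧ ∫ s in a..b, f s = c * (b - a) := by
  have hb : ∀ᵐ x : ℝ ∂volume, x ≠ b := by
    refine MeasureTheory.ae_iff.mpr ?_
    simp only [ne_eq, not_not, Set.setOf_eq_eq_singleton]
    exact measure_singleton b
  have hae : ∀ᵐ x ∂(volume : Measure ℝ), x ∈ Set.Ioc a b → f x = c := by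
    filter_upwards [hb] with x hx hxI
    exact h x ⟨hxI.1.le, lt_of_le_of_ne hxI.2 hx⟩
  have hres : f =ᵐ[volume.restrict (Set.Ioc a b)] fun _ => c :=
    (ae_restrict_iff' measurableSet_Ioc).mpr hae
  constructor
  · rw [intervalIntegrable_iff, Set.uIoc_of_le hab]
    exact ((integrableOn_const (C := c) measure_Ioc_lt_top.ne)).congr hres.symm
  · have h2 : ∫ s in a..b, f s = ∫ _ in a..b, c := by
      apply intervalIntegral.integral_congr_ae
      rw [Set.uIoc_of_le hab]
      exact hae
    rw [h2, intervalIntegral.integral_const, smul_eq_mul]; ring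

lemma Wsum_mono (w : ℕ → ℝ) (n : ℕ) (hw : ∀ j, 1 ≤ j → j ≤ n → 0 ≤ w j)
    {p q : ℕ} (hpq : p ≤ q) (hq : q ≤ n) : Wsum w p ≤ Wsum w q := by
  unfold Wsum
  apply Finset.sum_le_sum_of_subset_of_nonneg (Finset.Icc_subset_Icc_right hpq)
  intro j hj _
  exact hw j (Finset.mem_Icc.mp hj).1 (le_trans (Finset.mem_Icc.mp hj).2 hq)

lemma rateFn_window (n : ℕ) (w θ : ℕ → ℝ) (θH : ℝ)
    (hw : ∀ j, 1 ≤ j → j ≤ n → 0 ≤ w j) {j : ℕ} (hj1 : 1 ≤ j) (hjn : j ≤ n)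
    {s : ℝ} (hs1 : Wsum w (j - 1) ≤ s) (hs2 : s < Wsum w j) :
    rateFn n w θ θH s = θ j := by
  have hsn : s < Wsum w n := lt_of_lt_of_le hs2 (Wsum_mono w n hw hjn le_rfl)
  unfold rateFn
  rw [if_pos hsn]
  congr 1
  have hjS : j ∈ {i : ℕ | 1 ≤ i ∧ s < Wsum w i} := ⟨hj1, hs2⟩
  have hmem := Nat.sInf_mem (⟨j, hjS⟩ : Set.Nonempty {i : ℕ | 1 ≤ i ∧ s < Wsum w i})
  refine le_antisymm (Nat.sInf_le hjS) ?_
  by_contra hlt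
  push_neg at hlt
  have h1 : Wsum w (sInf {i : ℕ | 1 ≤ i ∧ s < Wsum w i}) ≤ Wsum w (j - 1) :=
    Wsum_mono w n hw (by omega) (by omega)
  have h2 := hmem.2
  linarith

lemma rateFn_tail (n : ℕ) (w θ : ℕ → ℝ) (θH : ℝ) {s : ℝ} (hs : Wsum w n ≤ s) :
    rateFn n w θ θH s = θH := by
  unfold rateFn; rw [if_neg (not_lt.mpr hs)]

open MeasureTheory in
/-- "If" direction of Theorem 1: under conditions (8)–(10), a carry-over job with
deadline `t ≥ D` after the mode switch receives at least `(C^H − C^L) + θ^L·(t − D)`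
units of allocation by its deadline. -/
theorem stmt2 (n : ℕ) (hn : 1 ≤ n) (w θ : ℕ → ℝ)
    (hw : ∀ j, 1 ≤ j → j ≤ n → 0 ≤ w j) (θH : ℝ)
    (T θL CL CH : ℝ) (hT : 0 < T) (hθL : 0 < θL) (hCL : 0 < CL) (hCLH : CL ≤ CH)
    (D : ℝ) (hDdef : D = T - CL / θL) (hD : 0 < D)
    (k : ℕ) (hk : ECW n w D k)
    (R : ℝ) (hR : R = if k ≤ n then θ k else θH)
    (h8 : CH - CL ≤ ∑ j ∈ Finset.Icc 1 (k - 1), θ j * w j + R * (D - Wsum w (k - 1)))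
    (h9 : ∀ j, k ≤ j → j ≤ n → θL ≤ θ j)
    (h10 : θL ≤ θH) :
    ∀ t, D ≤ t → (CH - CL) + θL * (t - D) ≤ ∫ s in (0:ℝ)..t, rateFn n w θ θH s := by
  obtain ⟨hk1, hk2, hkD, hkW⟩ := hk
  intro t ht
  set f := rateFn n w θ θH with hf
  have hkn : k - 1 ≤ n := by omega
  -- Part 1: integral over [0, W_p] for p ≤ n
  have part1 : ∀ p, p ≤ n → IntervalIntegrable f volume 0 (Wsum w p) ∧
      ∫ s in (0:ℝ)..(Wsum w p), f s = ∑ j ∈ Finset.Icc 1 p, θ j * w j := by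
    intro p
    induction p with
    | zero =>
      intro _
      have h0 : Wsum w 0 = 0 := by simp [Wsum]
      rw [h0]
      exact ⟨IntervalIntegrable.refl, by simp⟩
    | succ p ihp =>
      intro hpn
      obtain ⟨i1, i2⟩ := ihp (by omega)
      have hWle : Wsum w p ≤ Wsum w (p + 1) :=
        Wsum_mono w n hw (Nat.le_succ p) hpn
      have hpc : ∀ s ∈ Set.Ico (Wsum w p) (Wsum w (p + 1)), f s = θ (p + 1) := by
        intro s hs
        exact rateFn_window n w θ θH hw (by omega) hpn
          (by simpa using hs.1) hs.2
      obtain ⟨pint, pval⟩ := piece_const hWle hpc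
      have hWp1 : Wsum w (p + 1) = Wsum w p + w (p + 1) := by
        rw [Wsum, Wsum, Finset.sum_Icc_succ_top (by omega)]
      refine ⟨i1.trans pint, ?_⟩
      rw [← intervalIntegral.integral_add_adjacent_intervals i1 pint,
        Finset.sum_Icc_succ_top (by omega : 1 ≤ p + 1), i2, pval]
      rw [hWp1]; ring
  obtain ⟨i1, i2⟩ := part1 (k - 1) hkn
  -- Part 2: integral over [W_{k-1}, D]
  have hmidc : ∀ s ∈ Set.Ico (Wsum w (k - 1)) D, f s = R := by
    intro s hs
    by_cases hkle : k ≤ n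
    · rw [hR, if_pos hkle]
      exact rateFn_window n w θ θH hw hk1 hkle hs.1 (lt_of_lt_of_le hs.2 (hkW hkle))
    · rw [hR, if_neg hkle]
      have hkn1 : k - 1 = n := by omega
      exact rateFn_tail n w θ θH (hkn1 ▸ hs.1)
  obtain ⟨mint, mval⟩ := piece_const hkD.le hmidc
  -- Part 3: integral over [D, t] is at least θL * (t - D)
  set c : ℕ → ℝ := fun j => min t (max D (Wsum w j)) with hc
  have hcbase : c (k - 1) = D := by
    simp only [hc]
    rw [max_eq_left hkD.le, min_eq_right ht]
  have hcle : ∀ m, c m ≤ t := fun m => min_le_left _ _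
  have hcW : ∀ m, c m < t → c m = max D (Wsum w m) := by
    intro m hm
    rcases min_cases t (max D (Wsum w m)) with ⟨h1, h2⟩ | ⟨h1, h2⟩
    · exact absurd (h1 ▸ hm) (lt_irrefl t)
    · exact h1
  have key : ∀ m, k - 1 ≤ m → m ≤ n →
      IntervalIntegrable f volume D (c m) ∧ θL * (c m - D) ≤ ∫ s in D..(c m), f s := by
    intro m
    induction m with
    | zero =>
      intro h1 _
      have : k - 1 = 0 := by omega
      rw [← this, hcbase]
      exact ⟨IntervalIntegrable.refl, by simp⟩
    | succ m ihm =>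
      intro h1 h2
      by_cases hm : k - 1 ≤ m
      · obtain ⟨j1, j2⟩ := ihm hm (by omega)
        have hkm : k ≤ m + 1 := by omega
        have hWle : Wsum w m ≤ Wsum w (m + 1) := Wsum_mono w n hw (Nat.le_succ m) h2
        have hcm : c m ≤ c (m + 1) := by
          exact min_le_min le_rfl (max_le_max le_rfl hWle)
        have hDW : D ≤ Wsum w (m + 1) :=
          le_trans (hkW (by omega)) (Wsum_mono w n hw hkm h2)
        have hpc : ∀ s ∈ Set.Ico (c m) (c (m + 1)), f s = θ (m + 1) := by
          intro s hs
          have hlt : c m < t := lt_of_le_of_lt hs.1 (lt_of_lt_of_le hs.2 (hcle _))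
          have h3 := hcW m hlt
          have hs1 : Wsum w m ≤ s := le_trans (le_trans (le_max_right D _) (h3 ▸ hs.1)) le_rfl
          have hs2 : s < Wsum w (m + 1) := by
            have : c (m + 1) ≤ max D (Wsum w (m + 1)) := min_le_right _ _
            rw [max_eq_right hDW] at this
            exact lt_of_lt_of_le hs.2 this
          exact rateFn_window n w θ θH hw (by omega) h2 (by simpa using hs1) hs2
        obtain ⟨pint, pval⟩ := piece_const hcm hpc
        refine ⟨j1.trans pint, ?_⟩
        rw [← intervalIntegral.integral_add_adjacent_intervals j1 pint, pval]
        have hθ : θL ≤ θ (m + 1) := h9 (m + 1) hkm h2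
        have hlen : 0 ≤ c (m + 1) - c m := by linarith
        nlinarith
      · have : m + 1 = k - 1 := by omega
        rw [this, hcbase]
        exact ⟨IntervalIntegrable.refl, by simp⟩
  obtain ⟨j1, j2⟩ := key n hkn le_rfl
  -- tail piece [c n, t]
  have htailc : ∀ s ∈ Set.Ico (c n) t, f s = θH := by
    intro s hs
    have h3 := hcW n (lt_of_le_of_lt hs.1 hs.2)
    exact rateFn_tail n w θ θH (le_trans (le_trans (le_max_right D _) (h3 ▸ le_rfl)) hs.1)
  obtain ⟨tint, tval⟩ := piece_const (hcle n) htailc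
  have hDcn : D ≤ c n := le_min ht (le_max_left _ _)
  -- assemble
  have hInt0D : IntervalIntegrable f volume 0 D := i1.trans mint
  have hIntDt : IntervalIntegrable f volume D t := j1.trans tint
  have e1 : (∫ s in (0:ℝ)..(Wsum w (k-1)), f s) + (∫ s in (Wsum w (k-1))..D, f s)
      = ∫ s in (0:ℝ)..D, f s := intervalIntegral.integral_add_adjacent_intervals i1 mint
  have e2 : (∫ s in (0:ℝ)..D, f s) + (∫ s in D..t, f s) = ∫ s in (0:ℝ)..t, f s :=
    intervalIntegral.integral_add_adjacent_intervals hInt0D hIntDt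
  have e3 : (∫ s in D..(c n), f s) + (∫ s in (c n)..t, f s) = ∫ s in D..t, f s :=
    intervalIntegral.integral_add_adjacent_intervals j1 tint
  have hθHb : θL * (t - c n) ≤ θH * (t - c n) :=
    mul_le_mul_of_nonneg_right h10 (by linarith [hcle n])
  linarith
end

section
/- Let T > 0 and 0 < C^L ≤ C^H be reals, set u^L = C^L/T and u^H = C^H/T, and let θ^L > 0, θ^H > 0 be rates. Let n ≥ 1, let w_1, …, w_n ≥ 0, set the transition rates θ_j := θ^H for all 1 ≤ j ≤ n and the stable rate θH := θ^H, set D = T − C^L/θ^L, and let k ∈ {1, …, n+1} be an earliest completion window for D, with R = θ_k if k ≤ n and R = θH if k = n+1. Then the conjunction of the multi-rate HI-task conditions — (8) Σ_{j=1}^{k−1} θ_j·w_j + R·(D − W_{k−1}) ≥ C^H − C^L; (9) θ_j ≥ θ^L for all k ≤ j ≤ n; (10) θH ≥ θ^L; (12) Σ_{j=1}^{k−1} θ_j·w_j ≥ u^H·W_{k−1}; (13) θ_j ≤ θ_{j+1} for all 1 ≤ j < k with j+1 ≤ n; (14) θ_j ≥ u^H for all k ≤ j ≤ n; (15) θH ≥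 u^H — holds if and only if u^L/θ^L + (u^H − u^L)/θ^H ≤ 1 and θ^L ≤ θ^H. -/
/-- Per-task core of **Lemma 2** (dual-rate generalization): when all transition rates
`θ_j` and the stable rate `θH` of a HI-task equal its dual HI-mode rate `θ^H`, the
multi-rate HI-task conditions (8), (9), (10), (12), (13), (14), (15) hold iff the
dual-rate conditions `u^L/θ^L + (u^H − u^L)/θ^H ≤ 1` and `θ^L ≤ θ^H` hold. -/
theorem stmt5 (T CL CH uL uH θL θHI : ℝ)
    (hT : 0 < T) (hCL : 0 < CL) (hCLH : CL ≤ CH)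
    (huL : uL = CL / T) (huH : uH = CH / T)
    (hθL : 0 < θL) (hθHI : 0 < θHI)
    (n : ℕ) (hn : 1 ≤ n) (w : ℕ → ℝ) (hw : ∀ j, 1 ≤ j → j ≤ n → 0 ≤ w j)
    (θ : ℕ → ℝ) (hθ : ∀ j, 1 ≤ j → j ≤ n → θ j = θHI)
    (θH : ℝ) (hθH : θH = θHI)
    (D : ℝ) (hDdef : D = T - CL / θL)
    (k : ℕ) (hk : ECW n w D k)
    (R : ℝ) (hR : R = if k ≤ n then θ k else θH) :
    ((CH - CL ≤ ∑ j ∈ Finset.Icc 1 (k - 1), θ j * w j + R * (D - Wsum w (k - 1))) ∧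
      (∀ j, k ≤ j → j ≤ n → θL ≤ θ j) ∧
      (θL ≤ θH) ∧
      (uH * Wsum w (k - 1) ≤ ∑ j ∈ Finset.Icc 1 (k - 1), θ j * w j) ∧
      (∀ j, 1 ≤ j → j < k → j + 1 ≤ n → θ j ≤ θ (j + 1)) ∧
      (∀ j, k ≤ j → j ≤ n → uH ≤ θ j) ∧
      (uH ≤ θH)) ↔
    (uL / θL + (uH - uL) / θHI ≤ 1 ∧ θL ≤ θHI) := by

  obtain ⟨hk1, hk2, hkD, hkW⟩ := hk
  have hkn : k - 1 ≤ n := by omega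
  have hW : 0 ≤ Wsum w (k - 1) := Finset.sum_nonneg (fun j hj => by
    simp only [Finset.mem_Icc] at hj; exact hw j hj.1 (hj.2.trans hkn))
  have hsum : ∑ j ∈ Finset.Icc 1 (k - 1), θ j * w j = θHI * Wsum w (k - 1) := by
    rw [Wsum, Finset.mul_sum]
    exact Finset.sum_congr rfl (fun j hj => by
      simp only [Finset.mem_Icc] at hj
      rw [hθ j hj.1 (hj.2.trans hkn)])
  have hRval : R = θHI := by
    rw [hR]; split_ifs with h
    · exact hθ k hk1 h
    · exact hθH
  rw [hRval, hsum, hθH, huL, huH, hDdef]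
  have hT' : T ≠ 0 := ne_of_gt hT
  have hθL' : θL ≠ 0 := ne_of_gt hθL
  have hθHI' : θHI ≠ 0 := ne_of_gt hθHI
  have hcancel : CL / θL * θL = CL := div_mul_cancel₀ CL hθL'
  have key : (CL / T / θL + (CH / T - CL / T) / θHI ≤ 1) ↔
      CH - CL ≤ θHI * Wsum w (k - 1) + θHI * (T - CL / θL - Wsum w (k - 1)) := by
    rw [div_div, div_sub_div_same, div_div,
        div_add_div _ _ (by positivity : (T * θL : ℝ) ≠ 0) (by positivity : (T * θHI : ℝ) ≠ 0),
        div_le_one (by positivity : (0:ℝ) < T * θL * (T * θHI))]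
    constructor <;> intro h <;>
      nlinarith [mul_pos hθL hθHI, mul_pos hT hθHI, mul_pos hT hθL, hcancel,
        mul_pos (mul_pos hT hθL) hθHI]
  constructor
  · rintro ⟨h8, _, h10, _⟩
    exact ⟨key.mpr h8, h10⟩
  · rintro ⟨hd, hle⟩
    have h8 := key.mp hd
    have huHθ : CH / T ≤ θHI := by
      rw [div_le_iff₀ hT]
      nlinarith [mul_le_mul_of_nonneg_right hle (le_of_lt (div_pos hCL hθL))]
    refine ⟨h8, fun j hj1 hj2 => ?_, hle, ?_, fun j hj1 hj2 hj3 => ?_,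
      fun j hj1 hj2 => ?_, huHθ⟩
    · rw [hθ j (hk1.trans hj1) hj2]; exact hle
    · exact mul_le_mul_of_nonneg_right huHθ hW
    · rw [hθ j hj1 (by omega), hθ (j+1) (by omega) hj3]
    · rw [hθ j (hk1.trans hj1) hj2]; exact huHθ
end

section
/- Let τ be a finite index set of tasks and τ_H ⊆ τ the subset of HI-tasks, with n_H = |τ_H| ≥ 1. For each i ∈ τ let T_i > 0 and 0 < C_i^L ≤ C_i^H be reals, and set u_i^L = C_i^L/T_i and u_i^H = C_i^H/T_i. Let m be a positive real. Suppose there exist rates (θ_i^L)_{i∈τ} and (θ_i^H)_{i∈τ_H} with 0 < θ_i^L ≤ 1 and 0 < θ_i^H ≤ 1 satisfying the dual-rate test: (1) θ_i^L ≥ u_i^L for all i ∈ τ; (2) u_i^L/θ_i^L + (u_i^H − u_i^L)/θ_i^H ≤ 1 for all i ∈ τ_H; (3) θ_i^L ≤ θ_i^H for all i ∈ τ_H; (4) Σ_{i∈τ} θ_i^L ≤ m; and (5) Σ_{i∈τ_H} θ_i^H ≤ m. Then the multi-rate assignment with the same LO-mode rates θ_i^L, transition rates θ_{i,j}^H :=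 θ_i^H for all 1 ≤ j ≤ n_H, stable rates θ_i^H, window durations w_j := 0 for all j, and k_i := n_H + 1 for each i ∈ τ_H satisfies all multi-rate schedulability conditions: θ_i^L ≥ u_i^L for all i ∈ τ; Σ_{i∈τ} θ_i^L ≤ m; Σ_{i∈τ_H} θ_{i,j}^H ≤ m for each window j and Σ_{i∈τ_H} θ_i^H ≤ m; and for each i ∈ τ_H, with D_i = T_i − C_i^L/θ_i^L: θ_i^H·D_i ≥ C_i^H − C_i^L, θ_i^L ≤ θ_i^H, and θ_i^H ≥ u_i^H. -/
/-- Core of **Lemma 3** (dominance of the multi-rate model over the dual-rate model):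
any feasible dual-rate assignment `(θ_i^L, θ_i^H)` satisfying the dual-rate test
(1)–(5) yields a feasible multi-rate assignment with transition rates
`θ_{i,j}^H := θ_i^H`, window durations `w_j := 0` and `k_i := n_H + 1`, i.e. all
multi-rate schedulability conditions hold (Equation (8) with all windows of zero
duration reduces to `θ_i^H·D_i ≥ C_i^H − C_i^L` where `D_i = T_i − C_i^L/θ_i^L`). -/
theorem stmt10 {ι : Type*} (τ τH : Finset ι) (hsub : τH ⊆ τ)
    (nH : ℕ) (hnH : nH = τH.card) (hnH1 : 1 ≤ nH)
    (T CL CH : ι → ℝ)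
    (hT : ∀ i ∈ τ, 0 < T i) (hCL : ∀ i ∈ τ, 0 < CL i) (hCLH : ∀ i ∈ τ, CL i ≤ CH i)
    (uL uH : ι → ℝ)
    (huL : ∀ i ∈ τ, uL i = CL i / T i) (huH : ∀ i ∈ τ, uH i = CH i / T i)
    (m : ℝ) (hm : 0 < m)
    (θL θHI : ι → ℝ)
    (hθL : ∀ i ∈ τ, 0 < θL i ∧ θL i ≤ 1)
    (hθHI : ∀ i ∈ τH, 0 < θHI i ∧ θHI i ≤ 1)
    (c1 : ∀ i ∈ τ, uL i ≤ θL i)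
    (c2 : ∀ i ∈ τH, uL i / θL i + (uH i - uL i) / θHI i ≤ 1)
    (c3 : ∀ i ∈ τH, θL i ≤ θHI i)
    (c4 : ∑ i ∈ τ, θL i ≤ m)
    (c5 : ∑ i ∈ τH, θHI i ≤ m)
    -- the multi-rate assignment: transition rates `θt i j = θHI i`, windows `wz j = 0`
    (θt : ι → ℕ → ℝ) (hθt : ∀ i ∈ τH, ∀ j, 1 ≤ j → j ≤ nH → θt i j = θHI i)
    (wz : ℕ → ℝ) (hwz : ∀ j, 1 ≤ j → j ≤ nH → wz j = 0)
    (ki : ι → ℕ) (hki : ∀ i ∈ τH, ki i = nH + 1)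
    (D : ι → ℝ) (hD : ∀ i ∈ τH, D i = T i - CL i / θL i) :
    (∀ i ∈ τ, uL i ≤ θL i) ∧
    (∑ i ∈ τ, θL i ≤ m) ∧
    (∀ j, 1 ≤ j → j ≤ nH → ∑ i ∈ τH, θt i j ≤ m) ∧
    (∑ i ∈ τH, θHI i ≤ m) ∧
    (∀ i ∈ τH,
      CH i - CL i ≤ θHI i * D i ∧ θL i ≤ θHI i ∧ uH i ≤ θHI i) := by
  refine ⟨c1, c4, ?_, c5, ?_⟩
  · intro j h1 h2
    calc ∑ i ∈ τH, θt i j = ∑ i ∈ τH, θHI i :=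
          Finset.sum_congr rfl fun i hi => hθt i hi j h1 h2
      _ ≤ m := c5
  · intro i hi
    have hiτ := hsub hi
    have hTi := hT i hiτ
    have hCLi := hCL i hiτ
    obtain ⟨hθLp, hθL1⟩ := hθL i hiτ
    obtain ⟨hθHp, hθH1⟩ := hθHI i hi
    have huLi := huL i hiτ
    have huHi := huH i hiτ
    have hc2 := c2 i hi
    have hc3 := c3 i hi
    have huLp : 0 < uL i := by rw [huLi]; positivity
    -- uH ≤ θHI
    have h3 : uH i ≤ θHI i := by
      have h1 : uL i / θHI i ≤ uL i / θL i :=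
        div_le_div_of_nonneg_left huLp.le hθLp hc3
      have h2 : uH i / θHI i ≤ 1 := by
        have : uL i / θHI i + (uH i - uL i) / θHI i ≤ 1 := by linarith
        rwa [← add_div, add_sub_cancel] at this
      calc uH i = (uH i / θHI i) * θHI i := by field_simp
        _ ≤ 1 * θHI i := by
            exact mul_le_mul_of_nonneg_right h2 hθHp.le
        _ = θHI i := one_mul _
    refine ⟨?_, hc3, h3⟩
    -- carry-over
    have hD' := hD i hi
    have key : (uH i - uL i) / θHI i ≤ 1 - uL i / θL i := by linarith
    have key2 : uH i - uL i ≤ θHI i * (1 - uL i / θL i) := by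
      rw [div_le_iff₀ hθHp] at key; linarith [key]
    have h4 : (uH i - uL i) * T i ≤ θHI i * (1 - uL i / θL i) * T i :=
      mul_le_mul_of_nonneg_right key2 hTi.le
    have hCHe : uH i * T i = CH i := by rw [huHi]; field_simp
    have hCLe : uL i * T i = CL i := by rw [huLi]; field_simp
    have hDe : θHI i * (1 - uL i / θL i) * T i = θHI i * D i := by
      rw [hD', huLi]; field_simp
    calc CH i - CL i = (uH i - uL i) * T i := by rw [sub_mul, hCHe, hCLe]
      _ ≤ θHI i * (1 - uL i / θL i) * T i := h4
      _ = θHI i * D i := hDe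
end

section
/- Let τ_H be a finite set of HI-tasks and n ≥ 1 the number of transition windows; for each i ∈ τ_H let T_i > 0 and 0 < C_i^L ≤ C_i^H be reals with u_i^L = C_i^L/T_i and u_i^H = C_i^H/T_i, let 0 < θ_i^L and 0 < θ_i^H be rates, let w_1, …, w_n ≥ 0 be window durations, and suppose the transition rates satisfy θ_{i,j}^H = θ_i^H for all i ∈ τ_H and all 1 ≤ j ≤ n. Set D_i = T_i − C_i^L/θ_i^L, suppose D_i > 0, and let k_i ∈ {1, …, n+1} be an earliest completion window for D_i for each i, with R_i = θ_{i,k_i}^H if k_i ≤ n and R_i = θ_i^H otherwise. Then the conjunction over all i ∈ τ_H of the HI-task conditions of Theorems 1 and 2 of the multi-rate test — Σ_{j<k_i} θ_{i,j}^H·w_j + R_i·(D_i − W_{k_i−1}) ≥ C_i^H − C_i^L; θ_{i,j}^H ≥ θ_i^L for k_i ≤ j ≤ n; θ_i^H ≥ θ_i^L; Σ_{j<k_i} θ_{i,j}^H·w_j ≥ u_i^H·W_{k_i−1}; θ_{i,j}^H ≤ θ_{i,j+1}^H for 1 ≤ j < k_i with j+1 ≤ n; θ_{i,j}^H ≥ u_i^H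 for k_i ≤ j ≤ n; θ_i^H ≥ u_i^H — holds if and only if for every i ∈ τ_H: u_i^L/θ_i^L + (u_i^H − u_i^L)/θ_i^H ≤ 1 and θ_i^L ≤ θ_i^H. -/
/-- **Lemma 2** (dual-rate generalization), restricted to the HI-task conditions:
if every transition rate `θt i j` of each HI-task equals its stable HI-mode rate
`θHI i`, then the HI-task conditions of Theorems 1 and 2 of the multi-rate test hold
for all HI-tasks iff the dual-rate conditions
`u_i^L/θ_i^L + (u_i^H − u_i^L)/θ_i^H ≤ 1` and `θ_i^L ≤ θ_i^H` hold for all HI-tasks. -/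
theorem stmt11 {ι : Type*} (τH : Finset ι) (n : ℕ) (hn : 1 ≤ n)
    (T CL CH : ι → ℝ)
    (hT : ∀ i ∈ τH, 0 < T i) (hCL : ∀ i ∈ τH, 0 < CL i) (hCLH : ∀ i ∈ τH, CL i ≤ CH i)
    (uL uH : ι → ℝ)
    (huL : ∀ i ∈ τH, uL i = CL i / T i) (huH : ∀ i ∈ τH, uH i = CH i / T i)
    (θL θHI : ι → ℝ)
    (hθL : ∀ i ∈ τH, 0 < θL i) (hθHI : ∀ i ∈ τH, 0 < θHI i)
    (w : ℕ → ℝ) (hw : ∀ j, 1 ≤ j → j ≤ n → 0 ≤ w j)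
    (θt : ι → ℕ → ℝ) (hθt : ∀ i ∈ τH, ∀ j, 1 ≤ j → j ≤ n → θt i j = θHI i)
    (D : ι → ℝ) (hD : ∀ i ∈ τH, D i = T i - CL i / θL i) (hDpos : ∀ i ∈ τH, 0 < D i)
    (k : ι → ℕ) (hk : ∀ i ∈ τH, ECW n w (D i) (k i))
    (R : ι → ℝ) (hR : ∀ i ∈ τH, R i = if k i ≤ n then θt i (k i) else θHI i) :
    (∀ i ∈ τH,
      (CH i - CL i ≤
        ∑ j ∈ Finset.Icc 1 (k i - 1), θt i j * w j + R i * (D i - Wsum w (k i - 1))) ∧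
      (∀ j, k i ≤ j → j ≤ n → θL i ≤ θt i j) ∧
      (θL i ≤ θHI i) ∧
      (uH i * Wsum w (k i - 1) ≤ ∑ j ∈ Finset.Icc 1 (k i - 1), θt i j * w j) ∧
      (∀ j, 1 ≤ j → j < k i → j + 1 ≤ n → θt i j ≤ θt i (j + 1)) ∧
      (∀ j, k i ≤ j → j ≤ n → uH i ≤ θt i j) ∧
      (uH i ≤ θHI i)) ↔
    (∀ i ∈ τH, uL i / θL i + (uH i - uL i) / θHI i ≤ 1 ∧ θL i ≤ θHI i) := by
  have hsum : ∀ i ∈ τH, ∑ j ∈ Finset.Icc 1 (k i - 1), θt i j * w j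
      = θHI i * Wsum w (k i - 1) := by
    intro i hi
    obtain ⟨hk1, hk2, hk3, hk4⟩ := hk i hi
    rw [Wsum, Finset.mul_sum]
    refine Finset.sum_congr rfl ?_
    intro j hj
    simp only [Finset.mem_Icc] at hj
    rw [hθt i hi j hj.1 (by omega)]
  have hRval : ∀ i ∈ τH, R i = θHI i := by
    intro i hi
    obtain ⟨hk1, hk2, hk3, hk4⟩ := hk i hi
    rw [hR i hi]
    split
    · exact hθt i hi (k i) hk1 (by assumption)
    · rfl
  have hWnn : ∀ i ∈ τH, 0 ≤ Wsum w (k i - 1) := by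
    intro i hi
    obtain ⟨hk1, hk2, hk3, hk4⟩ := hk i hi
    refine Finset.sum_nonneg ?_
    intro j hj
    simp only [Finset.mem_Icc] at hj
    exact hw j hj.1 (by omega)
  have hexpand : ∀ i ∈ τH,
      uL i / θL i + (uH i - uL i) / θHI i
        = (CL i * θHI i / θL i + (CH i - CL i)) / (T i * θHI i) := by
    intro i hi
    rw [huL i hi, huH i hi]
    have h1 := (hT i hi).ne'
    have h2 := (hθL i hi).ne'
    have h3 := (hθHI i hi).ne'
    field_simp
  constructor
  · intro h i hi
    obtain ⟨h1, _, h3, _, _, _, _⟩ := h i hi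
    refine ⟨?_, h3⟩
    have hmain : CH i - CL i ≤ θHI i * D i := by
      rw [hsum i hi, hRval i hi] at h1
      nlinarith [h1]
    have hT' := hT i hi; have hθHI' := hθHI i hi
    rw [hexpand i hi, div_le_one (by positivity)]
    rw [hD i hi, mul_sub] at hmain
    have heq : θHI i * (CL i / θL i) = CL i * θHI i / θL i := by ring
    rw [heq] at hmain
    linarith
  · intro h i hi
    obtain ⟨hineq, hle⟩ := h i hi
    have hT' := hT i hi; have hCL' := hCL i hi
    have hθL' := hθL i hi; have hθHI' := hθHI i hi
    have hkey : CL i * θHI i / θL i + (CH i - CL i) ≤ T i * θHI i := by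
      rw [hexpand i hi, div_le_one (by positivity)] at hineq
      exact hineq
    have hmain : CH i - CL i ≤ θHI i * D i := by
      rw [hD i hi, mul_sub]
      have heq : θHI i * (CL i / θL i) = CL i * θHI i / θL i := by ring
      rw [heq]
      linarith
    have hCLle : CL i ≤ CL i * θHI i / θL i := by
      rw [le_div_iff₀ hθL']
      nlinarith
    have hCHle : CH i ≤ T i * θHI i := by linarith
    have huHθ : uH i ≤ θHI i := by
      rw [huH i hi, div_le_iff₀ hT']
      linarith
    obtain ⟨hk1, hk2, hk3, hk4⟩ := hk i hi
    refine ⟨?_, ?_, hle, ?_, ?_, ?_, huHθ⟩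
    · rw [hsum i hi, hRval i hi]
      nlinarith [hmain]
    · intro j hj1 hj2
      rw [hθt i hi j (by omega) hj2]; exact hle
    · rw [hsum i hi]
      exact mul_le_mul_of_nonneg_right huHθ (hWnn i hi)
    · intro j hj1 hj2 hj3
      rw [hθt i hi j hj1 (by omega), hθt i hi (j + 1) (by omega) hj3]
    · intro j hj1 hj2
      rw [hθt i hi j (by omega) hj2]; exact huHθ
end
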